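/- Let b > 0, β > 0, R > 0, a, c, k real, and suppose f is twice differentiable on (0,R) and satisfies the equation (−4b² r³ + 4b²(R−β) r² + 4b²βR r) f'' + (8b³ r⁴ + 4b(c + 2b²(β−R)) r³ − 4b(b − βc + bk + 2b²βR + cR) r² − 4b(βcR + b(β + βk + R − kR)) r + 4b²β(k−1)R) f' + ([4b³(2+k) − c² − 4b²E] r³ + (4ab² + 2bc(1+k) + (c² + 4b²E)(R−β) + 4b³(β(k+2) − kR)) r² + (2b(βc(1+k) − 2b(k−1)) + (β(c² + 4b²E) − 4ab² − 2bc(k−1) − 4b³βk)R) r − 2bβ(k−1)(2b + cR)) f = 0. Then u(r) = r^{(k−1)/2}(R − r) exp(−(c/(2b)) r − (b/2) r²) f(r) satisfies −u'' + [(k−1)(k−3)/(4r²) + a/(r+β) + c r + b² r²] u = E u on (0,R), and u(R) = 0. -/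

import Mathlib

set_option maxHeartbeats 1000000 in
theorem stmt_17 (b β R a c k E : ℝ) (hb : 0 < b) (hβ : 0 < β) (hR : 0 < R)
    (f : ℝ → ℝ) (hf : ContDiffOn ℝ 2 f (Set.Ioo 0 R))
    (hfODE : ∀ r ∈ Set.Ioo (0 : ℝ) R,
        (-4 * b ^ 2 * r ^ 3 + 4 * b ^ 2 * (R - β) * r ^ 2 + 4 * b ^ 2 * β * R * r) *
            deriv (deriv f) r +
          (8 * b ^ 3 * r ^ 4 + 4 * b * (c + 2 * b ^ 2 * (β - R)) * r ^ 3 -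
            4 * b * (b - β * c + b * k + 2 * b ^ 2 * β * R + c * R) * r ^ 2 -
            4 * b * (β * c * R + b * (β + β * k + R - k * R)) * r +
            4 * b ^ 2 * β * (k - 1) * R) * deriv f r +
          ((4 * b ^ 3 * (2 + k) - c ^ 2 - 4 * b ^ 2 * E) * r ^ 3 +
            (4 * a * b ^ 2 + 2 * b * c * (1 + k) + (c ^ 2 + 4 * b ^ 2 * E) * (R - β) +
              4 * b ^ 3 * (β * (k + 2) - k * R)) * r ^ 2 +
            (2 * b * (β * c * (1 + k) - 2 * b * (k - 1)) +
              (β * (c ^ 2 + 4 * b ^ 2 * E) - 4 * a * b ^ 2 - 2 * b * c * (k - 1) -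
                4 * b ^ 3 * β * k) * R) * r -
            2 * b * β * (k - 1) * (2 * b + c * R)) * f r = 0)
    (u : ℝ → ℝ)
    (hu : u = fun r : ℝ =>
      r ^ ((k - 1) / 2) * (R - r) * Real.exp (-(c / (2 * b)) * r - (b / 2) * r ^ 2) * f r) :
    (∀ r ∈ Set.Ioo (0 : ℝ) R,
        -(deriv (deriv u) r) +
          ((k - 1) * (k - 3) / (4 * r ^ 2) + a / (r + β) + c * r + b ^ 2 * r ^ 2) * u r
          = E * u r) ∧ u R = 0 := by
  subst hu
  have hfdiff : DifferentiableOn ℝ f (Set.Ioo 0 R) := hf.differentiableOn (by norm_num)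
  have hf1 : ∀ x ∈ Set.Ioo (0:ℝ) R, HasDerivAt f (deriv f x) x := fun x hx =>
    (hfdiff.differentiableAt (isOpen_Ioo.mem_nhds hx)).hasDerivAt
  have hfd2 : DifferentiableOn ℝ (deriv f) (Set.Ioo 0 R) :=
    (hf.deriv_of_isOpen (m := 1) isOpen_Ioo (by norm_num)).differentiableOn (by norm_num)
  have hf2 : ∀ x ∈ Set.Ioo (0:ℝ) R, HasDerivAt (deriv f) (deriv (deriv f) x) x := fun x hx =>
    (hfd2.differentiableAt (isOpen_Ioo.mem_nhds hx)).hasDerivAt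
  have hW : ∀ x : ℝ, HasDerivAt (fun y : ℝ => -(c/(2*b))*y - (b/2)*y^2) (-(c/(2*b)) - b*x) x := by
    intro x
    have h := ((hasDerivAt_id x).const_mul (-(c/(2*b)))).sub ((hasDerivAt_pow 2 x).const_mul (b/2))
    exact h.congr_deriv (by push_cast; ring)
  have hExp : ∀ x : ℝ, HasDerivAt (fun y : ℝ => Real.exp (-(c/(2*b))*y - (b/2)*y^2))
      (Real.exp (-(c/(2*b))*x - (b/2)*x^2) * (-(c/(2*b)) - b*x)) x := fun x => (hW x).exp
  have hWd : ∀ x : ℝ, HasDerivAt (fun y : ℝ => -(c/(2*b)) - b*y) (-b) x := by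
    intro x
    have h := ((hasDerivAt_id x).const_mul b).const_sub (-(c/(2*b)))
    exact h.congr_deriv (by ring)
  have hD1 : ∀ x ∈ Set.Ioo (0:ℝ) R, HasDerivAt
      (fun r : ℝ => r ^ ((k - 1) / 2) * (R - r) * Real.exp (-(c / (2 * b)) * r - (b / 2) * r ^ 2) * f r)
      (((( (k-1)/2 * x ^ ((k-1)/2 - 1)) * (R - x) + x ^ ((k-1)/2) * (-1)) *
          Real.exp (-(c/(2*b))*x - (b/2)*x^2) +
          x ^ ((k-1)/2) * (R - x) * (Real.exp (-(c/(2*b))*x - (b/2)*x^2) * (-(c/(2*b)) - b*x))) * f x +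
        x ^ ((k-1)/2) * (R - x) * Real.exp (-(c/(2*b))*x - (b/2)*x^2) * deriv f x) x := by
    intro x hx
    have hrp : HasDerivAt (fun y : ℝ => y ^ ((k-1)/2)) ((k-1)/2 * x ^ ((k-1)/2 - 1)) x :=
      Real.hasDerivAt_rpow_const (Or.inl hx.1.ne')
    have hRr : HasDerivAt (fun y : ℝ => R - y) (-1) x := by
      simpa using (hasDerivAt_id x).const_sub R
    exact ((hrp.mul hRr).mul (hExp x)).mul (hf1 x hx)
  constructor
  · intro r hr
    beta_reduce
    have hr0 : (0:ℝ) < r := hr.1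
    have hrR : r < R := hr.2
    have hRr0 : (0:ℝ) < R - r := by linarith
    have hβr0 : (0:ℝ) < r + β := by linarith
    -- rewrite second derivative
    have hev : deriv (fun r : ℝ => r ^ ((k - 1) / 2) * (R - r) *
          Real.exp (-(c / (2 * b)) * r - (b / 2) * r ^ 2) * f r) =ᶠ[nhds r]
        (fun x : ℝ => (((( (k-1)/2 * x ^ ((k-1)/2 - 1)) * (R - x) + x ^ ((k-1)/2) * (-1)) *
          Real.exp (-(c/(2*b))*x - (b/2)*x^2) +
          x ^ ((k-1)/2) * (R - x) * (Real.exp (-(c/(2*b))*x - (b/2)*x^2) * (-(c/(2*b)) - b*x))) * f x +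
        x ^ ((k-1)/2) * (R - x) * Real.exp (-(c/(2*b))*x - (b/2)*x^2) * deriv f x)) :=
      Filter.eventuallyEq_of_mem (isOpen_Ioo.mem_nhds hr) (fun x hx => (hD1 x hx).deriv)
    -- second derivative combinator
    have hq1 : HasDerivAt (fun y : ℝ => y ^ ((k-1)/2 - 1)) (((k-1)/2 - 1) * r ^ ((k-1)/2 - 2)) r := by
      have h := Real.hasDerivAt_rpow_const (p := (k-1)/2 - 1) (Or.inl hr0.ne')
      rwa [show (k-1)/2 - 1 - 1 = (k-1)/2 - 2 by ring] at h
    have hqp : HasDerivAt (fun y : ℝ => y ^ ((k-1)/2)) ((k-1)/2 * r ^ ((k-1)/2 - 1)) r :=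
      Real.hasDerivAt_rpow_const (Or.inl hr0.ne')
    have hRr : HasDerivAt (fun y : ℝ => R - y) (-1) r := by
      simpa using (hasDerivAt_id r).const_sub R
    have t6 := (((((hq1.const_mul ((k-1)/2)).mul hRr).add (hqp.mul_const (-1))).mul (hExp r)).add
          ((hqp.mul hRr).mul ((hExp r).mul (hWd r)))).mul (hf1 r hr)
    have t7 := ((hqp.mul hRr).mul (hExp r)).mul (hf2 r hr)
    have tot := t6.add t7
    simp only [Pi.mul_def, Pi.add_def] at tot
    rw [hev.deriv_eq, tot.deriv]
    -- rpow rewrites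
    have e1 : r ^ ((k-1)/2) = r ^ ((k-1)/2 - 2) * r * r := by
      rw [← Real.rpow_add_one hr0.ne' ((k-1)/2 - 2), ← Real.rpow_add_one hr0.ne']
      congr 1; ring
    have e2 : r ^ ((k-1)/2 - 1) = r ^ ((k-1)/2 - 2) * r := by
      rw [← Real.rpow_add_one hr0.ne' ((k-1)/2 - 2)]
      congr 1; ring
    rw [e1, e2]
    -- solve the ODE for f''
    have hA4ne : (4 * b ^ 2 * r * (R - r) * (r + β)) ≠ 0 :=
      ne_of_gt (mul_pos (mul_pos (mul_pos (by positivity) hr0) hRr0) hβr0)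
    have hsolve : deriv (deriv f) r =
        -((8 * b ^ 3 * r ^ 4 + 4 * b * (c + 2 * b ^ 2 * (β - R)) * r ^ 3 -
            4 * b * (b - β * c + b * k + 2 * b ^ 2 * β * R + c * R) * r ^ 2 -
            4 * b * (β * c * R + b * (β + β * k + R - k * R)) * r +
            4 * b ^ 2 * β * (k - 1) * R) * deriv f r +
          ((4 * b ^ 3 * (2 + k) - c ^ 2 - 4 * b ^ 2 * E) * r ^ 3 +
            (4 * a * b ^ 2 + 2 * b * c * (1 + k) + (c ^ 2 + 4 * b ^ 2 * E) * (R - β) +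
              4 * b ^ 3 * (β * (k + 2) - k * R)) * r ^ 2 +
            (2 * b * (β * c * (1 + k) - 2 * b * (k - 1)) +
              (β * (c ^ 2 + 4 * b ^ 2 * E) - 4 * a * b ^ 2 - 2 * b * c * (k - 1) -
                4 * b ^ 3 * β * k) * R) * r -
            2 * b * β * (k - 1) * (2 * b + c * R)) * f r) /
          (4 * b ^ 2 * r * (R - r) * (r + β)) := by
      rw [eq_div_iff hA4ne]
      linear_combination hfODE r hr
    rw [hsolve]
    generalize r ^ ((k-1)/2 - 2) = X
    generalize Real.exp (-(c / (2 * b)) * r - b / 2 * r ^ 2) = Ex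
    field_simp [hr0.ne', hβr0.ne', hb.ne', hRr0.ne']
    ring
  · simp
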